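/- Let f(z) = ∑_{n=0}^∞ a_n z^n be analytic on the unit disk with |f| ≤ 1, let k ≥ 1 be an integer and p ∈ (0,2]. Then |a_0|^p + ∑_{n=1}^∞ |a_{kn}| r^{kn} ≤ 1 for all r ≤ (p/(2+p))^{1/k}, and this radius is sharp. -/

import Mathlib

set_option maxHeartbeats 1000000

open Metric

section BohrAux
open Complex Finset

-- Schwarz at 0 (value 0 at center), closed-ball version
lemma schwarz0 {g : ℂ → ℂ} (hd : DifferentiableOn ℂ g (ball 0 1))
    (hb : ∀ z ∈ ball (0:ℂ) 1, ‖g z‖ ≤ 1) (h0 : g 0 = 0) :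
    ‖deriv g 0‖ ≤ 1 := by
  have key : ∀ ε : ℝ, 0 < ε → ‖deriv g 0‖ ≤ 1 + ε := by
    intro ε hε
    have hm : Set.MapsTo g (ball 0 1) (closedBall (g 0) (1 + ε)) := by
      intro z hz
      rw [mem_closedBall, h0, dist_zero_right]
      exact le_trans (hb z hz) (by linarith)
    have := Complex.norm_deriv_le_div_of_mapsTo_ball hd hm one_pos
    simpa using this
  linarith [le_of_forall_pos_le_add (fun ε hε => key ε hε)]

-- Möbius numerator/denominator inequality
lemma mobius_le {c w : ℂ} (hc : ‖c‖ ≤ 1) (hw : ‖w‖ ≤ 1) :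
    ‖w - c‖ ≤ ‖1 - (starRingEnd ℂ) c * w‖ := by
  have hkey : Complex.normSq (1 - (starRingEnd ℂ) c * w) - Complex.normSq (w - c)
      = (1 - Complex.normSq c) * (1 - Complex.normSq w) := by
    have h1 : ((Complex.normSq (1 - (starRingEnd ℂ) c * w) : ℂ))
        - (Complex.normSq (w - c) : ℂ)
        = ((1 - Complex.normSq c : ℝ) : ℂ) * ((1 - Complex.normSq w : ℝ) : ℂ) := by
      rw [← Complex.mul_conj, ← Complex.mul_conj]
      push_cast [← Complex.mul_conj]
      simp only [map_sub, map_mul, map_one, Complex.conj_conj]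
      ring
    exact_mod_cast h1
  have h2 : Complex.normSq (w - c) ≤ Complex.normSq (1 - (starRingEnd ℂ) c * w) := by
    nlinarith [Complex.normSq_nonneg c, Complex.normSq_nonneg w,
      (Complex.sq_norm c).symm, (Complex.sq_norm w).symm, Complex.sq_norm c ▸ (pow_le_one₀ (norm_nonneg c) hc : ‖c‖ ^ 2 ≤ 1),
      Complex.sq_norm w ▸ (pow_le_one₀ (norm_nonneg w) hw : ‖w‖ ^ 2 ≤ 1)]
  rw [Complex.norm_def, Complex.norm_def]
  exact Real.sqrt_le_sqrt h2

lemma schwarz_pick0 {g : ℂ → ℂ} (hd : DifferentiableOn ℂ g (ball 0 1))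
    (hb : ∀ z ∈ ball (0:ℂ) 1, ‖g z‖ ≤ 1) :
    ‖deriv g 0‖ ≤ 1 - ‖g 0‖ ^ 2 := by
  have h0mem : (0:ℂ) ∈ ball (0:ℂ) 1 := by simp
  by_cases habs : ‖g 0‖ = 1
  · -- max modulus: g constant
    have hmax : IsMaxOn (norm ∘ g) (ball 0 1) 0 := by
      intro z hz
      simp only [Function.comp_apply, Set.mem_setOf_eq, habs]
      exact hb z hz
    have heq := Complex.eqOn_of_isPreconnected_of_isMaxOn_norm
      (convex_ball (0:ℂ) 1).isPreconnected isOpen_ball hd h0mem hmax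
    have hev : g =ᶠ[nhds (0:ℂ)] (fun _ => g 0) := by
      filter_upwards [isOpen_ball.mem_nhds h0mem] with z hz using heq hz
    have hder0 : deriv g 0 = deriv (fun _ : ℂ => g 0) 0 := hev.deriv_eq
    rw [hder0, deriv_const]
    simp [habs]
  · set c := g 0 with hc
    have hcle : ‖c‖ ≤ 1 := hb 0 h0mem
    have hclt : ‖c‖ < 1 := lt_of_le_of_ne hcle habs
    have hden : ∀ z ∈ ball (0:ℂ) 1, 1 - (starRingEnd ℂ) c * g z ≠ 0 := by
      intro z hz h
      have : ‖(starRingEnd ℂ) c * g z‖ < 1 := by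
        rw [norm_mul, Complex.norm_conj]
        calc ‖c‖ * ‖g z‖ ≤ ‖c‖ * 1 :=
          mul_le_mul_of_nonneg_left (hb z hz) (norm_nonneg c)
        _ < 1 := by simpa using hclt
      rw [sub_eq_zero] at h
      rw [← h] at this
      simp at this
    set G : ℂ → ℂ := fun z => (g z - c) / (1 - (starRingEnd ℂ) c * g z) with hG
    have hdG : DifferentiableOn ℂ G (ball 0 1) := by
      apply DifferentiableOn.div
      · exact hd.sub (differentiableOn_const c)
      · exact (differentiableOn_const 1).sub ((differentiableOn_const _).mul hd)
      · exact hden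
    have hbG : ∀ z ∈ ball (0:ℂ) 1, ‖G z‖ ≤ 1 := by
      intro z hz
      have hpos : 0 < ‖1 - (starRingEnd ℂ) c * g z‖ :=
        norm_pos_iff.mpr (hden z hz)
      rw [hG]
      simp only [norm_div]
      rw [div_le_one hpos]
      exact mobius_le hcle (hb z hz)
    have hG0 : G 0 = 0 := by simp [hG, ← hc]
    have hSch := schwarz0 hdG hbG hG0
    -- compute deriv G 0
    have hgat : DifferentiableAt ℂ g 0 := hd.differentiableAt (isOpen_ball.mem_nhds h0mem)
    have hgd : HasDerivAt g (deriv g 0) 0 := hgat.hasDerivAt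
    have hd0 : (1 : ℂ) - (starRingEnd ℂ) c * c ≠ 0 := by
      have := hden 0 h0mem; rwa [← hc] at this
    have hnum : HasDerivAt (fun z => g z - c) (deriv g 0) 0 := hgd.sub_const c
    have hdenD : HasDerivAt (fun z => 1 - (starRingEnd ℂ) c * g z)
        (-((starRingEnd ℂ) c * deriv g 0)) 0 := by
      simpa using ((hgd.const_mul ((starRingEnd ℂ) c)).const_sub 1)
    have hGd : HasDerivAt G
        ((deriv g 0 * (1 - (starRingEnd ℂ) c * g 0) -
          (g 0 - c) * -((starRingEnd ℂ) c * deriv g 0)) /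
          (1 - (starRingEnd ℂ) c * g 0) ^ 2) 0 := hnum.div hdenD (by rw [← hc]; exact hd0)
    have hGd' : deriv G 0 = deriv g 0 / (1 - (starRingEnd ℂ) c * c) := by
      rw [hGd.deriv, ← hc]
      field_simp
      ring
    rw [hGd'] at hSch
    have habs_d : (1:ℂ) - (starRingEnd ℂ) c * c = ((1 - ‖c‖ ^ 2 : ℝ) : ℂ) := by
      rw [Complex.sq_norm]
      rw [← Complex.normSq_eq_conj_mul_self]
      push_cast
      ring
    rw [norm_div, habs_d] at hSch
    have hpos : (0:ℝ) < 1 - ‖c‖ ^ 2 := by nlinarith [norm_nonneg c]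
    rw [Complex.norm_real, Real.norm_eq_abs, abs_of_pos hpos, div_le_one hpos] at hSch
    simpa [← hc] using hSch

lemma rootsum (m : ℕ) (hm : 1 ≤ m) (n : ℕ) :
    ∑ j ∈ Finset.range m, (Complex.exp ((2 * Real.pi / m : ℝ) * Complex.I)) ^ (j * n)
      = if m ∣ n then (m : ℂ) else 0 := by
  set ω : ℂ := Complex.exp ((2 * Real.pi / m : ℝ) * Complex.I) with hω
  have hm0 : (m:ℝ) ≠ 0 := Nat.cast_ne_zero.mpr (by omega)
  have hωeq : ω = Complex.exp (2 * Real.pi * Complex.I / m) := by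
    rw [hω]; congr 1; push_cast; field_simp
  have hprim : IsPrimitiveRoot ω m := by
    rw [hωeq]; exact Complex.isPrimitiveRoot_exp m (by omega)
  have hωm : ω ^ m = 1 := hprim.pow_eq_one
  have hterm : ∀ j, ω ^ (j * n) = (ω ^ n) ^ j := by
    intro j; rw [← pow_mul, Nat.mul_comm]
  simp_rw [hterm]
  by_cases hdvd : m ∣ n
  · have : ω ^ n = 1 := by
      obtain ⟨t, rfl⟩ := hdvd
      rw [pow_mul, hωm, one_pow]
    simp [this, hdvd]
  · have hne : ω ^ n ≠ 1 := fun h => hdvd ((hprim.pow_eq_one_iff_dvd n).mp h)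
    rw [geom_sum_eq hne]
    rw [← pow_mul, Nat.mul_comm n m, pow_mul, hωm, one_pow]
    simp [hdvd]

lemma key_slice {f : ℂ → ℂ} {a : ℕ → ℂ}
    (hsum : ∀ z ∈ ball (0:ℂ) 1, HasSum (fun n => a n * z ^ n) (f z))
    (hb : ∀ z ∈ ball (0:ℂ) 1, ‖f z‖ ≤ 1)
    (m : ℕ) (hm : 1 ≤ m) :
    ∀ u : ℂ, ‖u‖ < 1 →
      ∃ S, HasSum (fun t => a (m * t) * u ^ t) S ∧ ‖S‖ ≤ 1 := by
  intro u hu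
  have hm0 : (m:ℕ) ≠ 0 := by omega
  -- m-th root of u
  obtain ⟨z, hzm, hz⟩ : ∃ z : ℂ, z ^ m = u ∧ ‖z‖ < 1 := by
    rcases eq_or_ne u 0 with rfl | hu0
    · exact ⟨0, by simp [zero_pow hm0], by simp⟩
    · refine ⟨u ^ ((m:ℂ)⁻¹), Complex.cpow_nat_inv_pow u hm0, ?_⟩
      have hw : ((m:ℂ)⁻¹) = (((m:ℝ)⁻¹ : ℝ) : ℂ) := by push_cast; ring
      rw [Complex.norm_cpow_of_ne_zero hu0, hw, Complex.ofReal_re, Complex.ofReal_im,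
        mul_zero, Real.exp_zero, div_one]
      exact Real.rpow_lt_one (norm_nonneg u) hu
        (inv_pos.mpr (by exact_mod_cast Nat.pos_of_ne_zero hm0))
  set ω : ℂ := Complex.exp ((2 * Real.pi / m : ℝ) * Complex.I) with hω
  have habsω : ‖ω‖ = 1 := Complex.norm_exp_ofReal_mul_I _
  have hmem : ∀ j : ℕ, ω ^ j * z ∈ ball (0:ℂ) 1 := by
    intro j
    rw [mem_ball_zero_iff]
    simp only [norm_mul, norm_pow, habsω, one_pow, one_mul]
    exact hz
  have h1 : HasSum (fun n => ∑ j ∈ Finset.range m, a n * (ω ^ j * z) ^ n)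
      (∑ j ∈ Finset.range m, f (ω ^ j * z)) :=
    hasSum_sum fun j _ => hsum _ (hmem j)
  have hcongr : (fun n => ∑ j ∈ Finset.range m, a n * (ω ^ j * z) ^ n)
      = fun n => if m ∣ n then (m:ℂ) * (a n * z ^ n) else 0 := by
    funext n
    have : ∀ j, a n * (ω ^ j * z) ^ n = ω ^ (j * n) * (a n * z ^ n) := by
      intro j; rw [mul_pow, ← pow_mul]; ring
    rw [Finset.sum_congr rfl fun j _ => this j, ← Finset.sum_mul, rootsum m hm n]
    split <;> simp
  rw [hcongr] at h1
  set T := ∑ j ∈ Finset.range m, f (ω ^ j * z) with hT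
  have hinj : Function.Injective (fun t : ℕ => m * t) := fun x y h => by
    simpa [Nat.mul_right_cancel_iff (Nat.pos_of_ne_zero hm0)] using
      Nat.eq_of_mul_eq_mul_left (Nat.pos_of_ne_zero hm0) h
  have hsupp : ∀ n, n ∉ Set.range (fun t : ℕ => m * t) →
      (if m ∣ n then (m:ℂ) * (a n * z ^ n) else 0) = 0 := by
    intro n hn
    rw [if_neg]
    rintro ⟨t, rfl⟩
    exact hn ⟨t, rfl⟩
  have h2 : HasSum ((fun n => if m ∣ n then (m:ℂ) * (a n * z ^ n) else 0) ∘
      (fun t : ℕ => m * t)) T := (hinj.hasSum_iff hsupp).mpr h1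
  have h3 : HasSum (fun t : ℕ => (m:ℂ) * (a (m * t) * u ^ t)) T := by
    refine h2.congr_fun fun t => ?_
    simp only [Function.comp_apply, if_pos (dvd_mul_right m t)]
    rw [pow_mul, hzm]
  have hmC : (m:ℂ) ≠ 0 := Nat.cast_ne_zero.mpr hm0
  have h4 : HasSum (fun t => a (m * t) * u ^ t) ((m:ℂ)⁻¹ * T) := by
    have := h3.mul_left ((m:ℂ)⁻¹)
    refine this.congr_fun fun t => ?_
    rw [← mul_assoc, inv_mul_cancel₀ hmC, one_mul]
  refine ⟨(m:ℂ)⁻¹ * T, h4, ?_⟩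
  have hTle : ‖T‖ ≤ m := by
    calc ‖T‖ = ‖T‖ := rfl
    _ ≤ ∑ j ∈ Finset.range m, ‖f (ω ^ j * z)‖ := norm_sum_le _ _
    _ ≤ ∑ _j ∈ Finset.range m, (1:ℝ) := Finset.sum_le_sum fun j _ => hb _ (hmem j)
    _ = m := by simp
  rw [norm_mul, norm_inv, Complex.norm_natCast]
  rw [inv_mul_le_iff₀ (by exact_mod_cast Nat.pos_of_ne_zero hm0)]
  simpa using hTle

lemma wiener {f : ℂ → ℂ} {a : ℕ → ℂ}
    (hsum : ∀ z ∈ ball (0:ℂ) 1, HasSum (fun n => a n * z ^ n) (f z))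
    (hb : ∀ z ∈ ball (0:ℂ) 1, ‖f z‖ ≤ 1)
    (m : ℕ) (hm : 1 ≤ m) :
    ‖a m‖ ≤ 1 - ‖a 0‖ ^ 2 := by
  have key := key_slice hsum hb m hm
  set q : FormalMultilinearSeries ℂ ℂ ℂ :=
    FormalMultilinearSeries.ofScalars ℂ (fun t => a (m * t)) with hq
  have hqnorm : ∀ n, ‖q n‖ = ‖a (m * n)‖ := fun n =>
    FormalMultilinearSeries.ofScalars_norm ℂ (fun t => a (m * t)) n
  have hrad : 1 ≤ q.radius := by
    refine ENNReal.le_of_forall_nnreal_lt fun r hr => ?_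
    have hr1 : (r:ℝ) < 1 := by exact_mod_cast hr
    have hu : ‖((r:ℝ):ℂ)‖ < 1 := by
      rwa [Complex.norm_real, Real.norm_eq_abs, _root_.abs_of_nonneg r.coe_nonneg]
    obtain ⟨S, hS, -⟩ := key ((r:ℝ):ℂ) hu
    apply q.le_radius_of_tendsto (l := 0)
    have h0 := hS.summable.tendsto_atTop_zero
    have := (continuous_norm.tendsto (0:ℂ)).comp h0
    simp only [Function.comp_def, norm_zero] at this
    refine this.congr fun n => ?_
    rw [hqnorm n, norm_mul, norm_pow, Complex.norm_real, Real.norm_eq_abs, _root_.abs_of_nonneg r.coe_nonneg]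
  have hrpos : 0 < q.radius := lt_of_lt_of_le one_pos hrad
  have hball : HasFPowerSeriesOnBall q.sum q 0 q.radius :=
    q.hasFPowerSeriesOnBall hrpos
  have hsub : ball (0:ℂ) 1 ⊆ Metric.eball (0:ℂ) q.radius := by
    intro z hz
    rw [Metric.mem_eball, edist_zero_right]
    refine lt_of_lt_of_le ?_ hrad
    rw [mem_ball_zero_iff] at hz
    rw [enorm_eq_nnnorm]
    exact_mod_cast (by exact_mod_cast hz : ‖z‖₊ < 1)
  have hd : DifferentiableOn ℂ q.sum (ball 0 1) :=
    (hball.differentiableOn).mono hsub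
  have hvals : ∀ u ∈ ball (0:ℂ) 1, HasSum (fun t => a (m * t) * u ^ t) (q.sum u) := by
    intro u hu
    have := q.hasSum (hsub hu)
    refine this.congr_fun fun t => ?_
    rw [hq, FormalMultilinearSeries.ofScalars_apply_eq, smul_eq_mul]
  have hbq : ∀ u ∈ ball (0:ℂ) 1, ‖q.sum u‖ ≤ 1 := by
    intro u hu
    obtain ⟨S, hS, hSle⟩ := key u (by rwa [mem_ball_zero_iff] at hu)
    rwa [(hvals u hu).unique hS]
  have h0 : q.sum 0 = a 0 := by
    have h1 := hvals 0 (by simp)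
    have h2 : HasSum (fun t => a (m * t) * (0:ℂ) ^ t) (a 0) := by
      have := hasSum_single (f := fun t => a (m * t) * (0:ℂ) ^ t) 0
        (fun t ht => by simp [zero_pow ht])
      simpa using this
    exact h1.unique h2
  have hder : deriv q.sum 0 = a m := by
    rw [hball.hasFPowerSeriesAt.deriv, hq, FormalMultilinearSeries.ofScalars_apply_eq]
    simp
  have := schwarz_pick0 hd hbq
  rwa [hder, h0] at this

lemma part1 (k : ℕ) (hk : 1 ≤ k) (p : ℝ) (hp : p ∈ Set.Ioc (0 : ℝ) 2)
    (f : ℂ → ℂ) (a : ℕ → ℂ)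
    (hsum : ∀ z ∈ ball (0 : ℂ) 1, HasSum (fun n => a n * z ^ n) (f z))
    (hb : ∀ z ∈ ball (0 : ℂ) 1, ‖f z‖ ≤ 1)
    (r : ℝ) (hr0 : 0 ≤ r) (hr : r ≤ (p / (2 + p)) ^ ((1 : ℝ) / k)) :
    ‖a 0‖ ^ p +
      ∑' n, ‖a (k * (n + 1))‖ * r ^ (k * (n + 1)) ≤ 1 := by
  obtain ⟨hp0, hp2⟩ := hp
  set x : ℝ := p / (2 + p) with hx
  have hx0 : 0 < x := by positivity
  have hx1 : x < 1 := by rw [hx, div_lt_one (by linarith)]; linarith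
  set ρ : ℝ := r ^ k with hρ
  have hρ0 : 0 ≤ ρ := pow_nonneg hr0 k
  have hρx : ρ ≤ x := by
    have h1 : r ^ k ≤ (x ^ ((1:ℝ)/k)) ^ k := pow_le_pow_left₀ hr0 hr k
    have h2 : (x ^ ((1:ℝ)/k)) ^ k = x := by
      rw [← Real.rpow_natCast (x ^ ((1:ℝ)/k)) k, ← Real.rpow_mul hx0.le,
        one_div, inv_mul_cancel₀ (by exact_mod_cast (by omega : k ≠ 0)), Real.rpow_one]
    rw [hρ]; rw [h2] at h1; exact h1
  have hρ1 : ρ < 1 := lt_of_le_of_lt hρx hx1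
  set A : ℝ := ‖a 0‖ with hA
  have hA0 : 0 ≤ A := norm_nonneg _
  have hf0 : f 0 = a 0 := by
    have h1 := hsum 0 (by simp)
    have h2 : HasSum (fun n => a n * (0:ℂ) ^ n) (a 0) := by
      have := hasSum_single (f := fun n => a n * (0:ℂ) ^ n) 0
        (fun n hn => by simp [zero_pow hn])
      simpa using this
    exact h1.unique h2
  have hA1 : A ≤ 1 := by rw [hA, ← hf0]; exact hb 0 (by simp)
  have hW : ∀ n : ℕ, ‖a (k * (n + 1))‖ ≤ 1 - A ^ 2 := fun n =>
    wiener hsum hb _ (by nlinarith [hk])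
  have hA2 : 0 ≤ 1 - A ^ 2 := by nlinarith
  -- geometric majorant
  have hterm : ∀ n : ℕ, ‖a (k * (n + 1))‖ * r ^ (k * (n + 1))
      ≤ ((1 - A ^ 2) * ρ) * ρ ^ n := by
    intro n
    have hrpow : r ^ (k * (n + 1)) = ρ * ρ ^ n := by
      rw [hρ, ← pow_mul, ← pow_add]
      congr 1
      ring
    rw [hrpow, ← mul_assoc]
    exact mul_le_mul_of_nonneg_right (mul_le_mul_of_nonneg_right (hW n) hρ0)
      (pow_nonneg hρ0 n)
  have hgs : Summable (fun n : ℕ => ((1 - A ^ 2) * ρ) * ρ ^ n) :=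
    (summable_geometric_of_lt_one hρ0 hρ1).mul_left _
  have hsumm : Summable (fun n : ℕ => ‖a (k * (n + 1))‖ * r ^ (k * (n + 1))) :=
    Summable.of_nonneg_of_le (fun n => by positivity) hterm hgs
  have htsum : ∑' n, ‖a (k * (n + 1))‖ * r ^ (k * (n + 1))
      ≤ (1 - A ^ 2) * ρ * (1 - ρ)⁻¹ := by
    calc ∑' n, ‖a (k * (n + 1))‖ * r ^ (k * (n + 1))
        ≤ ∑' n, ((1 - A ^ 2) * ρ) * ρ ^ n := Summable.tsum_le_tsum hterm hsumm hgs
    _ = ((1 - A ^ 2) * ρ) * (1 - ρ)⁻¹ := by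
        rw [tsum_mul_left, tsum_geometric_of_lt_one hρ0 hρ1]
  have hgeo : ρ * (1 - ρ)⁻¹ ≤ p / 2 := by
    rw [← div_eq_mul_inv, div_le_div_iff₀ (by linarith) (by norm_num)]
    have : ρ * (2 + p) ≤ p := by
      rw [hx, div_eq_mul_inv] at hρx
      calc ρ * (2 + p) ≤ (p * (2+p)⁻¹) * (2+p) := by
            exact mul_le_mul_of_nonneg_right hρx (by linarith)
      _ = p := by field_simp
    nlinarith
  have hAM : A ^ p ≤ 1 - (p / 2) * (1 - A ^ 2) := by
    have hw : p / 2 + (1 - p / 2) = 1 := by ring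
    have := Real.geom_mean_le_arith_mean2_weighted (by linarith : (0:ℝ) ≤ p/2)
      (by linarith : (0:ℝ) ≤ 1 - p/2) (by positivity : (0:ℝ) ≤ A^2)
      (by norm_num : (0:ℝ) ≤ 1) hw
    rw [Real.one_rpow, mul_one, mul_one] at this
    have hAp : A ^ p = (A ^ 2) ^ (p / 2 : ℝ) := by
      rw [← Real.rpow_natCast A 2, ← Real.rpow_mul hA0]
      congr 1
      push_cast
      ring
    rw [hAp]
    linarith
  have hchain : (1 - A ^ 2) * ρ * (1 - ρ)⁻¹ ≤ (1 - A ^ 2) * (p / 2) := by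
    rw [mul_assoc]
    exact mul_le_mul_of_nonneg_left hgeo hA2
  calc ‖a 0‖ ^ p + ∑' n, ‖a (k * (n + 1))‖ * r ^ (k * (n + 1))
      ≤ (1 - (p / 2) * (1 - A ^ 2)) + (1 - A ^ 2) * (p / 2) := by
        rw [← hA]; exact add_le_add hAM (le_trans htsum hchain)
  _ = 1 := by ring

lemma part2 (k : ℕ) (hk : 1 ≤ k) (p : ℝ) (hp : p ∈ Set.Ioc (0 : ℝ) 2)
    (r : ℝ) (hrlow : (p / (2 + p)) ^ ((1 : ℝ) / k) < r) (hr1 : r < 1) :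
    ∃ (f : ℂ → ℂ) (a : ℕ → ℂ),
      (∀ z ∈ ball (0 : ℂ) 1, HasSum (fun n => a n * z ^ n) (f z)) ∧
      AnalyticOn ℂ f (ball (0 : ℂ) 1) ∧
      (∀ z ∈ ball (0 : ℂ) 1, ‖f z‖ ≤ 1) ∧
      1 < ‖a 0‖ ^ p +
        ∑' n, ‖a (k * (n + 1))‖ * r ^ (k * (n + 1)) := by
  obtain ⟨hp0, hp2⟩ := hp
  have hk0 : k ≠ 0 := by omega
  set x : ℝ := p / (2 + p) with hx
  have hx0 : 0 < x := by positivity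
  have hx1 : x < 1 := by rw [hx, div_lt_one (by linarith)]; linarith
  have hr0 : 0 < r := lt_of_le_of_lt (Real.rpow_nonneg hx0.le _) hrlow
  set ρ : ℝ := r ^ k with hρdef
  have hρ1 : ρ < 1 := pow_lt_one₀ hr0.le hr1 hk0
  have hρx : x < ρ := by
    have h1 : (x ^ ((1:ℝ)/k)) ^ k < r ^ k :=
      pow_lt_pow_left₀ hrlow (Real.rpow_nonneg hx0.le _) hk0
    have h2 : (x ^ ((1:ℝ)/k)) ^ k = x := by
      rw [← Real.rpow_natCast (x ^ ((1:ℝ)/k)) k, ← Real.rpow_mul hx0.le,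
        one_div, inv_mul_cancel₀ (by exact_mod_cast hk0), Real.rpow_one]
    rwa [h2] at h1
  have hρ0 : 0 < ρ := lt_trans hx0 hρx
  -- key positivity F1 = 2ρ - p(1-ρ) > 0
  have hF1 : 0 < 2 * ρ - p * (1 - ρ) := by
    rw [hx, div_lt_iff₀ (by linarith)] at hρx
    nlinarith
  set δ : ℝ := (2 * ρ - p * (1 - ρ)) / 6 with hδ
  have hδ0 : 0 < δ := by positivity
  have hδ3 : δ < 1 / 3 := by rw [hδ]; nlinarith
  set a : ℝ := 1 - δ with ha
  have ha0 : 0 < a := by rw [ha]; linarith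
  have ha1 : a < 1 := by rw [ha]; linarith
  have hkey : p * (1 - a * ρ) < a * (1 + a) * ρ := by
    have hda : δ * ρ ≤ δ := by nlinarith
    have hdb : p * (δ * ρ) ≤ 2 * (δ * ρ) := by nlinarith [mul_nonneg hδ0.le hρ0.le]
    have hdc : (0:ℝ) ≤ δ ^ 2 * ρ := by positivity
    rw [ha, hδ] at *
    nlinarith
  have haρ : a * ρ < 1 := by nlinarith
  -- rpow lower bound : a^p ≥ 1 - p(1-a)/a
  have hrpow_low : 1 - p * (1 - a) / a ≤ a ^ p := by
    have hlog : Real.log a⁻¹ ≤ a⁻¹ - 1 := Real.log_le_sub_one_of_pos (by positivity)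
    rw [Real.log_inv] at hlog
    have hloga : 1 - a⁻¹ ≤ Real.log a := by linarith
    have h1 : p * (1 - a⁻¹) ≤ p * Real.log a := mul_le_mul_of_nonneg_left hloga hp0.le
    have h2 : p * Real.log a + 1 ≤ Real.exp (p * Real.log a) := Real.add_one_le_exp _
    rw [Real.rpow_def_of_pos ha0, mul_comm (Real.log a) p]
    have : 1 - p * (1 - a) / a = p * (1 - a⁻¹) + 1 := by field_simp; ring
    linarith [this ▸ le_refl (1 - p * (1 - a) / a)]
  -- strict inequality target
  have hmain : 1 < a ^ p + (1 - a ^ 2) * ρ * (1 - a * ρ)⁻¹ := by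
    have hstrict : p * (1 - a) / a < (1 - a ^ 2) * ρ * (1 - a * ρ)⁻¹ := by
      rw [div_lt_iff₀ ha0, ← div_eq_mul_inv, div_mul_eq_mul_div, lt_div_iff₀ (by linarith)]
      nlinarith [mul_pos (sub_pos.mpr ha1) (mul_pos ha0 hρ0)]
    linarith
  clear_value x ρ δ a
  -- the function and coefficients
  set b : ℕ → ℂ := fun n =>
    ((if n = 0 then a else if k ∣ n then -(1 - a ^ 2) * a ^ (n / k - 1) else 0 : ℝ) : ℂ)
    with hb
  set f : ℂ → ℂ := fun z => ((a : ℂ) - z ^ k) / (1 - (a : ℂ) * z ^ k) with hf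
  have hden : ∀ z ∈ ball (0:ℂ) 1, (1 : ℂ) - (a:ℂ) * z ^ k ≠ 0 := by
    intro z hz h
    rw [mem_ball_zero_iff] at hz
    have habs : ‖(a:ℂ) * z ^ k‖ < 1 := by
      rw [norm_mul, norm_pow, Complex.norm_real, Real.norm_eq_abs, _root_.abs_of_nonneg ha0.le]
      calc a * ‖z‖ ^ k ≤ 1 * ‖z‖ ^ k := by
            apply mul_le_mul_of_nonneg_right ha1.le (by positivity)
      _ < 1 := by
            rw [one_mul]
            exact pow_lt_one₀ (norm_nonneg z) (by simpa using hz) hk0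
    rw [sub_eq_zero] at h
    rw [← h] at habs
    simp at habs
  refine ⟨f, b, ?_, ?_, ?_, ?_⟩
  · -- HasSum
    intro z hz
    rw [mem_ball_zero_iff] at hz
    set w : ℂ := z ^ k with hw
    have hwabs : ‖w‖ < 1 := by
      rw [hw, norm_pow]
      exact pow_lt_one₀ (norm_nonneg z) (by simpa using hz) hk0
    have hawlt : ‖(a:ℂ) * w‖ < 1 := by
      rw [norm_mul, Complex.norm_real, Real.norm_eq_abs,
        _root_.abs_of_nonneg ha0.le]
      calc a * ‖w‖ ≤ 1 * ‖w‖ := mul_le_mul_of_nonneg_right ha1.le (norm_nonneg w)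
      _ < 1 := by rw [one_mul]; exact hwabs
    have hne : (1 : ℂ) - (a:ℂ) * w ≠ 0 := hden z (by rwa [mem_ball_zero_iff])
    have hg : HasSum (fun t : ℕ => ((a:ℂ) * w) ^ t) (1 - (a:ℂ) * w)⁻¹ :=
      hasSum_geometric_of_norm_lt_one hawlt
    have h5 : HasSum (fun t : ℕ => (-(1 - a^2 : ℝ) : ℂ) * w * ((a:ℂ) * w) ^ t)
        ((-(1 - a^2 : ℝ) : ℂ) * w * (1 - (a:ℂ) * w)⁻¹) := hg.mul_left _
    have hcoeff : ∀ t : ℕ, b (k * (t + 1)) * z ^ (k * (t + 1))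
        = (-(1 - a^2 : ℝ) : ℂ) * w * ((a:ℂ) * w) ^ t := by
      intro t
      have h0 : k * (t + 1) ≠ 0 := by positivity
      have hdvd : k ∣ k * (t + 1) := dvd_mul_right k _
      have hdiv : (k * (t + 1)) / k - 1 = t := by
        rw [Nat.mul_div_cancel_left _ (by omega : 0 < k)]
        simp
      rw [hb]
      simp only [h0, if_false, hdvd, if_true, hdiv, if_neg h0]
      rw [pow_mul]
      push_cast
      ring
    have h6 : HasSum (fun t : ℕ => b (k * (t + 1)) * z ^ (k * (t + 1)))
        ((-(1 - a^2 : ℝ) : ℂ) * w * (1 - (a:ℂ) * w)⁻¹) :=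
      h5.congr_fun fun t => (hcoeff t).symm ▸ rfl
    have h7 := (hasSum_nat_add_iff (f := fun t : ℕ => b (k * t) * z ^ (k * t)) 1).mp
      (h6.congr_fun fun t => by norm_num)
    have hval : (-(1 - a^2 : ℝ) : ℂ) * w * (1 - (a:ℂ) * w)⁻¹
        + ∑ i ∈ Finset.range 1, b (k * i) * z ^ (k * i) = f z := by
      rw [Finset.sum_range_one]
      have hb00 : b (k * 0) * z ^ (k * 0) = (a : ℂ) := by
        rw [hb]; norm_num
      rw [hb00, hf]
      simp only [← hw]
      rw [eq_div_iff hne, add_mul, inv_mul_cancel_right₀ hne]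
      push_cast
      ring
    rw [hval] at h7
    have hinj : Function.Injective (fun t : ℕ => k * t) := fun s t h => by
      simp only at h
      exact Nat.eq_of_mul_eq_mul_left (by omega) h
    have hsupp : ∀ n, n ∉ Set.range (fun t : ℕ => k * t) → b n * z ^ n = 0 := by
      intro n hn
      have hn0 : n ≠ 0 := by rintro rfl; exact hn ⟨0, by simp⟩
      have hnd : ¬ k ∣ n := by rintro ⟨t, rfl⟩; exact hn ⟨t, rfl⟩
      rw [hb]
      simp [hn0, hnd]
    exact (hinj.hasSum_iff hsupp).mp h7
  · -- Analytic
    apply AnalyticOn.div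
    · exact analyticOn_const.sub ((analyticOn_id).pow k)
    · exact analyticOn_const.sub (analyticOn_const.mul ((analyticOn_id).pow k))
    · exact hden
  · -- bound
    intro z hz
    rw [mem_ball_zero_iff] at hz
    have hwabs : ‖z ^ k‖ ≤ 1 := by
      rw [norm_pow]
      exact le_of_lt (pow_lt_one₀ (norm_nonneg z) (by simpa using hz) hk0)
    have hca : ‖(a:ℂ)‖ ≤ 1 := by
      rw [Complex.norm_real, Real.norm_eq_abs, _root_.abs_of_nonneg ha0.le]; exact ha1.le
    have hm := mobius_le hca hwabs
    rw [Complex.conj_ofReal] at hm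
    have hpos : 0 < ‖1 - (a:ℂ) * z ^ k‖ :=
      norm_pos_iff.mpr (hden z (by rwa [mem_ball_zero_iff]))
    rw [hf]
    simp only [norm_div]
    rw [div_le_one hpos]
    calc ‖(a:ℂ) - z ^ k‖ = ‖z ^ k - (a:ℂ)‖ := by
          rw [norm_sub_rev]
    _ ≤ _ := hm
  · -- final strict inequality
    have hb0 : ‖b 0‖ = a := by
      rw [hb]; simp [_root_.abs_of_nonneg ha0.le]
    have hbn : ∀ n : ℕ, ‖b (k * (n + 1))‖ * r ^ (k * (n + 1))
        = ((1 - a^2) * ρ) * (a * ρ) ^ n := by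
      intro n
      have h0 : k * (n + 1) ≠ 0 := by positivity
      have hdvd : k ∣ k * (n + 1) := dvd_mul_right k _
      have hdiv : (k * (n + 1)) / k - 1 = n := by
        rw [Nat.mul_div_cancel_left _ (by omega : 0 < k)]
        simp
      rw [hb]
      simp only [h0, if_false, hdvd, if_true, hdiv, if_neg h0]
      rw [Complex.norm_real, Real.norm_eq_abs]
      rw [abs_mul, abs_neg, _root_.abs_of_nonneg (by nlinarith : (0:ℝ) ≤ 1 - a^2),
        _root_.abs_of_nonneg (by positivity : (0:ℝ) ≤ a ^ n)]
      rw [pow_mul, ← hρdef]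
      ring
    have haρ0 : 0 ≤ a * ρ := by positivity
    rw [hb0]
    have htsum : ∑' n, ‖b (k * (n + 1))‖ * r ^ (k * (n + 1))
        = (1 - a^2) * ρ * (1 - a * ρ)⁻¹ := by
      rw [tsum_congr hbn, tsum_mul_left, tsum_geometric_of_lt_one haρ0 haρ]
    rw [htsum]
    exact hmain

end BohrAux

/-- For `f ∈ 𝓑`, integer `k ≥ 1`, `p ∈ (0,2]`:
`|a₀|^p + ∑_{n≥1} |a_{kn}| r^{kn} ≤ 1` for `r ≤ (p/(2+p))^{1/k}`, and this is sharp. -/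
theorem bohr_lacunary (k : ℕ) (hk : 1 ≤ k) (p : ℝ) (hp : p ∈ Set.Ioc (0 : ℝ) 2) :
    (∀ (f : ℂ → ℂ) (a : ℕ → ℂ),
      (∀ z ∈ ball (0 : ℂ) 1, HasSum (fun n => a n * z ^ n) (f z)) →
      AnalyticOn ℂ f (ball (0 : ℂ) 1) →
      (∀ z ∈ ball (0 : ℂ) 1, ‖f z‖ ≤ 1) →
      ∀ r : ℝ, 0 ≤ r → r ≤ (p / (2 + p)) ^ ((1 : ℝ) / k) →
        ‖a 0‖ ^ p +
          ∑' n, ‖a (k * (n + 1))‖ * r ^ (k * (n + 1)) ≤ 1) ∧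
    (∀ r : ℝ, (p / (2 + p)) ^ ((1 : ℝ) / k) < r → r < 1 →
      ∃ (f : ℂ → ℂ) (a : ℕ → ℂ),
        (∀ z ∈ ball (0 : ℂ) 1, HasSum (fun n => a n * z ^ n) (f z)) ∧
        AnalyticOn ℂ f (ball (0 : ℂ) 1) ∧
        (∀ z ∈ ball (0 : ℂ) 1, ‖f z‖ ≤ 1) ∧
        1 < ‖a 0‖ ^ p +
          ∑' n, ‖a (k * (n + 1))‖ * r ^ (k * (n + 1))) := by
  constructor
  · intro f a hsum _hana hb r hr0 hr
    exact part1 k hk p hp f a hsum hb r hr0 hr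
  · intro r h1 h2
    exact part2 k hk p hp r h1 h2
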